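/- Let G be a binary quasigroup of order n with operation *, and for d ≥ 1 let T_d denote the number of transversals of the d-iterated quasigroup G. Then there exists a constant c = c(G,1) > 0 such that T_d / (n!)^{d-1} tends to c as d → ∞, where the limit is taken along the set of those d for which T_d is nonzero. -/

import Mathlib

/-- The left-to-right product `((a₁ * a₂) * ⋯) * a_m` of a list of elements of `Fin n`
under a binary operation `op`, where `e` is returned for the empty list
(all uses below have nonempty lists). -/
def leftProd {n : ℕ} (op : Fin n → Fin n → Fin n) (e : Fin n) : List (Fin n) → Fin n
  | [] => e
  | a :: l => l.foldl op a

/-- `SdSet op e d` is the support `S_d(G)` of the `d`-dimensional MDS code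
`M(G^[d-1])` of the `(d-1)`-iterated quasigroup `G` with operation `op`:
the set of `(x₁, …, x_d)` with `((…((x₁ * x₂) * x₃) * …) * x_d = e`,
where `e` plays the role of the fixed element `1` of `Fin n`. -/
def SdSet {n : ℕ} (op : Fin n → Fin n → Fin n) (e : Fin n) (d : ℕ) :
    Set (Fin d → Fin n) :=
  {x | leftProd op e (List.ofFn x) = e}

/-- `IsKMultiplex S k K` says that the multiset `K` is a `k`-multiplex over
`S ⊆ (Fin n)^d`: it consists of `k·n` elements of `S` and, for every coordinate `j`
and every symbol `v`, exactly `k` elements of `K` (counted with multiplicity) have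
`j`-th coordinate equal to `v`. -/
def IsKMultiplex {n d : ℕ} (S : Set (Fin d → Fin n)) (k : ℕ)
    (K : Multiset (Fin d → Fin n)) : Prop :=
  Multiset.card K = k * n ∧ (∀ x ∈ K, x ∈ S) ∧
    ∀ (j : Fin d) (v : Fin n), Multiset.card (K.filter (fun x => x j = v)) = k

/-- `Perk S k` is the number of `k`-multiplexes over `S` (the `k`-multipermanent). -/
noncomputable def Perk {n d : ℕ} (S : Set (Fin d → Fin n)) (k : ℕ) : ℕ :=
  Set.ncard {K : Multiset (Fin d → Fin n) | IsKMultiplex S k K}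

/-- `perk S k` is the number of `k`-plexes in `S` (`k`-multiplexes without repeated
elements), i.e. the `k`-permanent. -/
noncomputable def perk {n d : ℕ} (S : Set (Fin d → Fin n)) (k : ℕ) : ℕ :=
  Set.ncard {K : Multiset (Fin d → Fin n) | K.Nodup ∧ IsKMultiplex S k K}

/-- A transversal of the `d`-iterated quasigroup: a set `T` of `n` elements of
`S_{d+1}(G)` such that in each of the `d+1` coordinates the elements of `T` take
all `n` values. -/
def IsTransversal {n d : ℕ} (S : Set (Fin d → Fin n)) (T : Finset (Fin d → Fin n)) : Prop :=
  T.card = n ∧ (↑T ⊆ S) ∧ ∀ (j : Fin d) (v : Fin n), ∃ x ∈ T, x j = v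

/-- `Tcount op e d` is the number `T_d` of transversals of the `d`-iterated
quasigroup with operation `op`. -/
noncomputable def Tcount {n : ℕ} (op : Fin n → Fin n → Fin n) (e : Fin n) (d : ℕ) : ℕ :=
  Set.ncard {T : Finset (Fin (d + 1) → Fin n) | IsTransversal (SdSet op e (d + 1)) T}


-- ## Auxiliary development

section MarkovAux

theorem mul_mem_addclosed (D : Set ℕ) (h0 : 0 ∈ D) (hadd : ∀ x ∈ D, ∀ y ∈ D, x + y ∈ D) :
    ∀ m, ∀ d ∈ D, m * d ∈ D := by
  intro m
  induction m with
  | zero => intro d _; simpa using h0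
  | succ m ih => intro d hd; have := hadd _ (ih d hd) _ hd; rwa [← Nat.succ_mul] at this

theorem exists_u (D : Set ℕ) (h0 : 0 ∈ D) (hadd : ∀ x ∈ D, ∀ y ∈ D, x + y ∈ D) :
    ∀ l : List ℕ, (∀ x ∈ l, x ∈ D) → ∃ u ∈ D, u + l.foldr Nat.gcd 0 ∈ D := by
  intro l
  induction l with
  | nil => intro _; exact ⟨0, h0, by simpa using h0⟩
  | cons a l ih =>
    intro hl
    obtain ⟨u, hu, huh⟩ := ih (fun x hx => hl x (List.mem_cons_of_mem a hx))
    have ha : a ∈ D := hl a List.mem_cons_self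
    set h := l.foldr Nat.gcd 0 with hh
    rcases Nat.eq_zero_or_pos h with h0' | hpos
    · exact ⟨0, h0, by simpa [List.foldr_cons, ← hh, h0'] using ha⟩
    rcases Nat.eq_zero_or_pos a with ha0 | hapos
    · exact ⟨u, hu, by simpa [List.foldr_cons, ← hh, ha0] using huh⟩
    -- Bezout
    have hbez : (Nat.gcd a h : ℤ) = a * Nat.gcdA a h + h * Nat.gcdB a h := Nat.gcd_eq_gcd_ab a h
    set x : ℤ := Nat.gcdA a h with hx
    set y : ℤ := Nat.gcdB a h with hy
    set t : ℕ := x.natAbs + y.natAbs with ht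
    have habs1 : -x ≤ (x.natAbs : ℤ) := by
      rw [← Int.abs_eq_natAbs]; exact neg_le_abs x
    have habs2 : y ≤ (y.natAbs : ℤ) := by
      rw [← Int.abs_eq_natAbs]; exact le_abs_self y
    have htx : (x.natAbs : ℤ) ≤ (t : ℤ) := by exact_mod_cast Nat.le_add_right x.natAbs y.natAbs
    have hty : (y.natAbs : ℤ) ≤ (t : ℤ) := by exact_mod_cast Nat.le_add_left y.natAbs x.natAbs
    have htnn : (0:ℤ) ≤ (t:ℤ) := Int.natCast_nonneg t
    have hx' : 0 ≤ x + h * t := by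
      have h1 : (1:ℤ) ≤ h := by exact_mod_cast hpos
      nlinarith
    have hy' : 0 ≤ a * t - y := by
      have h1 : (1:ℤ) ≤ a := by exact_mod_cast hapos
      nlinarith
    set x' : ℕ := (x + h * t).toNat with hx'd
    set y'' : ℕ := (a * t - y).toNat with hy''d
    have key : h * y'' + Nat.gcd a h = x' * a := by
      have e1 : (x' : ℤ) = x + h * t := Int.toNat_of_nonneg hx'
      have e2 : (y'' : ℤ) = a * t - y := Int.toNat_of_nonneg hy'
      have : (h : ℤ) * y'' + Nat.gcd a h = x' * a := by rw [e1, e2, hbez]; ring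
      exact_mod_cast this
    refine ⟨y'' * (u + h), mul_mem_addclosed D h0 hadd _ _ huh, ?_⟩
    have heq : y'' * (u + h) + Nat.gcd a h = y'' * u + x' * a := by
      rw [Nat.mul_add, Nat.mul_comm y'' h]; omega
    simp only [List.foldr_cons, ← hh]
    rw [heq]
    exact hadd _ (mul_mem_addclosed D h0 hadd _ _ hu) _ (mul_mem_addclosed D h0 hadd _ _ ha)

theorem num_semigroup (D : Set ℕ) (h0 : 0 ∈ D) (hadd : ∀ x ∈ D, ∀ y ∈ D, x + y ∈ D)
    (hne : ∃ d ∈ D, d ≠ 0) :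
    ∃ p, 0 < p ∧ (∀ d ∈ D, p ∣ d) ∧ ∃ t0, ∀ t, t0 ≤ t → p * t ∈ D := by
  classical
  set G : Set ℕ := {g | 0 < g ∧ ∃ l : List ℕ, (∀ x ∈ l, x ∈ D) ∧ g = l.foldr Nat.gcd 0} with hG
  have hGne : G.Nonempty := by
    obtain ⟨d, hd, hd0⟩ := hne
    exact ⟨d, Nat.pos_of_ne_zero hd0, [d], by simpa using hd, by simp⟩
  set p := sInf G with hp
  obtain ⟨hppos, l, hlD, hpl⟩ : p ∈ G := Nat.sInf_mem hGne
  have hdvd : ∀ d ∈ D, p ∣ d := by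
    intro d hd
    have hmem : Nat.gcd d p ∈ G := by
      refine ⟨Nat.gcd_pos_of_pos_right d hppos, d :: l, ?_, by simp [hpl]⟩
      intro x hx
      rcases List.mem_cons.mp hx with rfl | hx
      · exact hd
      · exact hlD x hx
    have h1 : p ≤ Nat.gcd d p := Nat.sInf_le hmem
    have h2 : Nat.gcd d p ≤ p := Nat.le_of_dvd hppos (Nat.gcd_dvd_right d p)
    have : Nat.gcd d p = p := le_antisymm h2 h1
    exact this ▸ Nat.gcd_dvd_left d p
  obtain ⟨u, hu, hup⟩ := exists_u D h0 hadd l hlD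
  rw [← hpl] at hup
  obtain ⟨w, hw⟩ := hdvd u hu
  refine ⟨p, hppos, hdvd, w * w, ?_⟩
  intro t ht
  rcases Nat.eq_zero_or_pos w with hw0 | hwpos
  · have hpD : p ∈ D := by simpa [hw, hw0] using hup
    have := mul_mem_addclosed D h0 hadd t p hpD
    rwa [Nat.mul_comm] at this
  · set q := t / w with hq
    set β := t % w with hβ
    have hqw : w * q + β = t := Nat.div_add_mod t w
    have hβw : β < w := Nat.mod_lt t hwpos
    have hqβ : β ≤ q := by
      have : w ≤ q := Nat.le_div_iff_mul_le hwpos |>.mpr (by nlinarith)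
      omega
    have harith : (q - β) * u + β * (u + p) = p * t := by
      have hqwZ : (w:ℤ) * q + β = t := by exact_mod_cast hqw
      have e1Z : (u:ℤ) = p * w := by exact_mod_cast hw
      zify [hqβ]
      linear_combination (p:ℤ) * hqwZ + (q:ℤ) * e1Z
    rw [← harith]
    exact hadd _ (mul_mem_addclosed D h0 hadd _ _ hu) _ (mul_mem_addclosed D h0 hadd _ _ hup)

open Filter Topology Finset

variable {F : Type*} [Fintype F] [DecidableEq F]


theorem pow_entry_nonneg (P : Matrix F F ℝ) (hnn : ∀ u v, 0 ≤ P u v) :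
    ∀ d u v, 0 ≤ (P ^ d) u v := by
  intro d
  induction d with
  | zero =>
    intro u v
    rw [pow_zero, Matrix.one_apply]
    split <;> norm_num
  | succ d ih =>
    intro u v
    rw [pow_succ, Matrix.mul_apply]
    exact Finset.sum_nonneg fun x _ => mul_nonneg (ih u x) (hnn x v)

theorem pow_row_sum (P : Matrix F F ℝ) (hrow : ∀ u, ∑ v, P u v = 1) :
    ∀ d u, ∑ v, (P ^ d) u v = 1 := by
  intro d
  induction d with
  | zero => intro u; simp [Matrix.one_apply]
  | succ d ih =>
    intro u
    simp only [pow_succ, Matrix.mul_apply]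
    rw [Finset.sum_comm]
    calc ∑ x, ∑ v, (P ^ d) u x * P x v = ∑ x, (P ^ d) u x * ∑ v, P x v := by
          simp [Finset.mul_sum]
      _ = 1 := by simp [hrow, ih]

theorem pow_col_sum (P : Matrix F F ℝ) (hcol : ∀ v, ∑ u, P u v = 1) :
    ∀ d v, ∑ u, (P ^ d) u v = 1 := by
  intro d
  induction d with
  | zero => intro v; simp [Matrix.one_apply]
  | succ d ih =>
    intro v
    simp only [pow_succ, Matrix.mul_apply]
    rw [Finset.sum_comm]
    calc ∑ x, ∑ u, (P ^ d) u x * P x v = ∑ x, (∑ u, (P ^ d) u x) * P x v := by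
          simp [Finset.sum_mul]
      _ = 1 := by simp [hcol, ih]

theorem pow_add_apply (P : Matrix F F ℝ) (i j : ℕ) (u w : F) :
    (P ^ (i + j)) u w = ∑ v, (P ^ i) u v * (P ^ j) v w := by
  rw [pow_add, Matrix.mul_apply]

theorem pow_prod_le (P : Matrix F F ℝ) (hnn : ∀ u v, 0 ≤ P u v) (i j : ℕ) (u v w : F) :
    (P ^ i) u v * (P ^ j) v w ≤ (P ^ (i + j)) u w := by
  rw [pow_add_apply]
  exact Finset.single_le_sum
    (fun x _ => mul_nonneg (pow_entry_nonneg P hnn i u x) (pow_entry_nonneg P hnn j x w))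
    (Finset.mem_univ v)

set_option linter.unusedSectionVars false in
theorem exists_pos_of_sum_pos {s : Finset F} {f : F → ℝ} (h : 0 < ∑ x ∈ s, f x) :
    ∃ x ∈ s, 0 < f x := by
  by_contra hc
  push_neg at hc
  exact absurd (Finset.sum_nonpos hc) (not_le.mpr h)

theorem pos_step (P : Matrix F F ℝ) (hnn : ∀ u v, 0 ≤ P u v) {i j : ℕ} {u w : F}
    (h : 0 < (P ^ (i + j)) u w) : ∃ v, 0 < (P ^ i) u v ∧ 0 < (P ^ j) v w := by
  rw [pow_add_apply] at h
  obtain ⟨v, -, hv⟩ := exists_pos_of_sum_pos h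
  have h1 := pow_entry_nonneg P hnn i u v
  have h2 := pow_entry_nonneg P hnn j v w
  refine ⟨v, ?_, ?_⟩
  · rcases lt_or_eq_of_le h1 with h | h
    · exact h
    · exfalso; rw [← h] at hv; simpa using hv
  · rcases lt_or_eq_of_le h2 with h | h
    · exact h
    · exfalso; rw [← h] at hv; simpa using hv

theorem reach_symm (P : Matrix F F ℝ) (hnn : ∀ u v, 0 ≤ P u v)
    (hrow : ∀ u, ∑ v, P u v = 1) (hcol : ∀ v, ∑ u, P u v = 1) (u v : F)
    (h : ∃ d, 0 < (P ^ d) u v) : ∃ d, 0 < (P ^ d) v u := by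
  classical
  set R : Finset F := univ.filter (fun x => ∃ d, 0 < (P ^ d) v x) with hR
  have hmemR : ∀ x, x ∈ R ↔ ∃ d, 0 < (P ^ d) v x := by
    intro x; simp [hR]
  -- forward closure under one step
  have hfwd : ∀ x ∈ R, ∀ y, 0 < P x y → y ∈ R := by
    intro x hx y hxy
    obtain ⟨d, hd⟩ := (hmemR x).mp hx
    refine (hmemR y).mpr ⟨d + 1, ?_⟩
    have hle : (P ^ d) v x * (P ^ 1) x y ≤ (P ^ (d + 1)) v y := by
      rw [pow_add_apply]
      exact Finset.single_le_sum
        (fun z _ => mul_nonneg (pow_entry_nonneg P hnn d v z) (pow_entry_nonneg P hnn 1 z y))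
        (Finset.mem_univ x)
    have : 0 < (P ^ d) v x * (P ^ 1) x y := mul_pos hd (by rwa [pow_one])
    linarith
  -- row sums within R
  have hrowR : ∀ x ∈ R, ∑ y ∈ R, P x y = 1 := by
    intro x hx
    rw [← hrow x]
    apply Finset.sum_subset (Finset.subset_univ R)
    intro y _ hy
    rcases lt_or_eq_of_le (hnn x y) with hlt | heq
    · exact absurd (hfwd x hx y hlt) hy
    · exact heq.symm
  -- total sum
  have htot : ∑ x ∈ R, ∑ y ∈ R, P x y = (R.card : ℝ) := by
    rw [Finset.sum_congr rfl hrowR]; simp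
  have hcolle : ∀ y ∈ R, ∑ x ∈ R, P x y ≤ 1 := by
    intro y _
    rw [← hcol y]
    exact Finset.sum_le_sum_of_subset_of_nonneg (Finset.subset_univ R)
      (fun x _ _ => hnn x y)
  have hcolR : ∀ y ∈ R, ∑ x ∈ R, P x y = 1 := by
    have hsum : ∑ y ∈ R, ∑ x ∈ R, P x y = ∑ y ∈ R, (1:ℝ) := by
      rw [Finset.sum_comm, htot]; simp
    exact fun y hy => (Finset.sum_eq_sum_iff_of_le hcolle).mp hsum y hy
  -- backward closure under one step
  have hbwd1 : ∀ y ∈ R, ∀ x, 0 < P x y → x ∈ R := by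
    intro y hy x hxy
    by_contra hx
    have h1 : ∑ x ∈ univ, P x y = 1 := hcol y
    have h2 : ∑ x ∈ R, P x y = 1 := hcolR y hy
    have h3 : ∑ x ∈ univ \ R, P x y = 0 := by
      have := Finset.sum_sdiff (Finset.subset_univ R) (f := fun x => P x y)
      linarith
    have h4 : P x y = 0 := by
      have hnn' : ∀ z ∈ univ \ R, 0 ≤ P z y := fun z _ => hnn z y
      have := (Finset.sum_eq_zero_iff_of_nonneg hnn').mp h3 x (by simp [hx])
      exact this
    linarith
  -- backward closure under d steps
  have hbwd : ∀ d x y, y ∈ R → 0 < (P ^ d) x y → x ∈ R := by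
    intro d
    induction d with
    | zero =>
      intro x y hy hxy
      rw [pow_zero, Matrix.one_apply] at hxy
      split at hxy
      · rename_i h; rwa [h]
      · simp at hxy
    | succ d ih =>
      intro x y hy hxy
      obtain ⟨z, hz1, hz2⟩ := pos_step P hnn hxy
      rw [pow_one] at hz2
      exact ih x z (hbwd1 y hy z hz2) hz1
  obtain ⟨d, hd⟩ := h
  have hvR : v ∈ R := (hmemR v).mpr ⟨0, by simp [Matrix.one_apply]⟩
  exact (hmemR u).mp (hbwd d u v hvR hd)

set_option maxHeartbeats 1000000 in
theorem markov_limit (P : Matrix F F ℝ) (hnn : ∀ u v, 0 ≤ P u v)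
    (hrow : ∀ u, ∑ v, P u v = 1) (hcol : ∀ v, ∑ u, P u v = 1) (a b : F) :
    ∃ c : ℝ, 0 < c ∧ Tendsto (fun d : ℕ => (P ^ d) a b)
      (atTop ⊓ 𝓟 {d | (P ^ d) a b ≠ 0}) (𝓝 c) := by
  classical
  set S : Set ℕ := {d | (P ^ d) a b ≠ 0} with hS
  have hSpos : ∀ d, d ∈ S ↔ 0 < (P ^ d) a b := by
    intro d
    constructor
    · intro hd
      exact lt_of_le_of_ne (pow_entry_nonneg P hnn d a b) (Ne.symm hd)
    · intro hd
      exact ne_of_gt hd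
  by_cases hSfin : S.Finite
  · refine ⟨1, one_pos, ?_⟩
    have hbot : atTop ⊓ 𝓟 S = ⊥ := by
      rw [inf_principal_eq_bot]
      exact hSfin.eventually_cofinite_notMem.filter_mono Nat.cofinite_eq_atTop.ge
    rw [hbot]
    exact tendsto_bot
  have hSinf : S.Infinite := hSfin
  have hchain : ∀ {i j : ℕ} {u x w : F}, 0 < (P ^ i) u x → 0 < (P ^ j) x w →
      0 < (P ^ (i + j)) u w := by
    intro i j u x w hi hj
    exact lt_of_lt_of_le (mul_pos hi hj) (pow_prod_le P hnn i j u x w)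
  obtain ⟨s0, hs0S, hs0pos⟩ := hSinf.exists_gt 0
  have hab : 0 < (P ^ s0) a b := (hSpos s0).mp hs0S
  obtain ⟨mm, hmm⟩ := reach_symm P hnn hrow hcol a b ⟨s0, hab⟩
  set D : Set ℕ := {d | 0 < (P ^ d) b b} with hD
  have hD0 : 0 ∈ D := by simp [hD, Matrix.one_apply]
  have hDadd : ∀ x ∈ D, ∀ y ∈ D, x + y ∈ D := fun x hx y hy => hchain hx hy
  have hDne : ∃ d ∈ D, d ≠ 0 := ⟨mm + s0, hchain hmm hab, by omega⟩
  obtain ⟨p, hppos, hpdvd, t0, ht0⟩ := num_semigroup D hD0 hDadd hDne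
  have hcong : ∀ (y : F) (k k' : ℕ), 0 < (P ^ k) y b → 0 < (P ^ k') y b →
      k ≡ k' [MOD p] := by
    intro y k k' hk hk'
    obtain ⟨my, hmy⟩ := reach_symm P hnn hrow hcol y b ⟨k, hk⟩
    have h1 : p ∣ my + k := hpdvd _ (hchain hmy hk)
    have h2 : p ∣ my + k' := hpdvd _ (hchain hmy hk')
    have e1 : my + k ≡ my + k' [MOD p] :=
      (Nat.modEq_zero_iff_dvd.mpr h1).trans (Nat.modEq_zero_iff_dvd.mpr h2).symm
    exact Nat.ModEq.add_left_cancel' my e1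
  have hdvd_cancel : ∀ (w k : ℕ), p ∣ (p * w + k) → p ∣ k := by
    rintro w k ⟨c, hc⟩
    have h1 : p * w ≤ p * c := by omega
    have hwc : w ≤ c := Nat.le_of_mul_le_mul_left h1 hppos
    refine ⟨c - w, ?_⟩
    have hcZ : (p : ℤ) * w + k = p * c := by exact_mod_cast hc
    zify [hwc]
    linear_combination hcZ
  set C0 : Set F := {y | ∃ t, 0 < (P ^ (p * t)) y b} with hC0
  have hbC0 : b ∈ C0 := ⟨0, by simp [Matrix.one_apply]⟩
  have hblen : ∀ y ∈ C0, ∃ t, 0 < (P ^ (p * t)) b y := by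
    intro y hy
    obtain ⟨t, hyt⟩ := hy
    obtain ⟨k, hk⟩ := reach_symm P hnn hrow hcol y b ⟨p * t, hyt⟩
    have hloop : p ∣ k + p * t := hpdvd _ (hchain hk hyt)
    have hdk : p ∣ k := hdvd_cancel t k (by rwa [Nat.add_comm] at hloop)
    obtain ⟨t', rfl⟩ := hdk
    exact ⟨t', hk⟩
  have hfwdC0 : ∀ y ∈ C0, ∀ (j : ℕ) (x : F), 0 < (P ^ (p * j)) y x → x ∈ C0 := by
    intro y hy j x hyx
    obtain ⟨t1, ht1⟩ := hblen y hy
    obtain ⟨t, hyt⟩ := hy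
    obtain ⟨k, hk⟩ := reach_symm P hnn hrow hcol y x ⟨p * j, hyx⟩
    have hloop : 0 < (P ^ (p * t1 + (p * j + k) + p * t)) b b :=
      hchain (hchain ht1 (hchain hyx hk)) hyt
    have hdl : p ∣ p * t1 + (p * j + k) + p * t := hpdvd _ hloop
    have hdk : p ∣ k := hdvd_cancel (t1 + j + t) k
      (by rwa [show p * (t1 + j + t) + k = p * t1 + (p * j + k) + p * t by ring])
    obtain ⟨k', rfl⟩ := hdk
    refine ⟨k' + t, ?_⟩
    rw [show p * (k' + t) = p * k' + p * t by ring]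
    exact hchain hk hyt
  have hex1 : ∀ y : F, ∃ t, y ∈ C0 → 0 < (P ^ (p * t)) y b := by
    intro y
    by_cases h : y ∈ C0
    · obtain ⟨t, ht⟩ := h
      exact ⟨t, fun _ => ht⟩
    · exact ⟨0, fun hc => absurd hc h⟩
  choose ty hty using hex1
  have hex2 : ∀ y : F, ∃ t, y ∈ C0 → 0 < (P ^ (p * t)) b y := by
    intro y
    by_cases h : y ∈ C0
    · obtain ⟨t, ht⟩ := hblen y h
      exact ⟨t, fun _ => ht⟩
    · exact ⟨0, fun hc => absurd hc h⟩
  choose sy hsy using hex2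
  set K : ℕ := (Finset.univ.sup ty) + (Finset.univ.sup sy) + t0 + 1 with hK
  have hKpos : ∀ y ∈ C0, ∀ x ∈ C0, 0 < (P ^ (p * K)) y x := by
    intro y hy x hx
    have h1 : ty y ≤ Finset.univ.sup ty := Finset.le_sup (Finset.mem_univ y)
    have h2 : sy x ≤ Finset.univ.sup sy := Finset.le_sup (Finset.mem_univ x)
    set τ : ℕ := K - ty y - sy x with hτ
    have hsum : ty y + τ + sy x = K := by omega
    have hτ0 : t0 ≤ τ := by omega
    have hbb : 0 < (P ^ (p * τ)) b b := ht0 τ hτ0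
    have hcc := hchain (hchain (hty y hy) hbb) (hsy x hx)
    rwa [show p * (ty y) + p * τ + p * (sy x) = p * K by
      rw [← Nat.mul_add, ← Nat.mul_add, hsum]] at hcc
  set C0f : Finset F := univ.filter (fun y => y ∈ C0) with hC0f
  have hmemf : ∀ y, y ∈ C0f ↔ y ∈ C0 := by intro y; simp [hC0f]
  have hbf : b ∈ C0f := (hmemf b).mpr hbC0
  have hC0fne : C0f.Nonempty := ⟨b, hbf⟩
  set N0 : ℕ := C0f.card with hN0
  have hN0pos : 0 < N0 := Finset.card_pos.mpr hC0fne
  set vv : ℕ → F → ℝ := fun t y => (P ^ (p * t)) y b with hvv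
  have hv0 : ∀ t y, y ∉ C0 → vv t y = 0 := by
    intro t y hy
    by_contra hne
    have hpos : 0 < vv t y :=
      lt_of_le_of_ne (pow_entry_nonneg P hnn _ y b) (Ne.symm hne)
    exact hy ⟨t, hpos⟩
  have hvnn : ∀ t y, 0 ≤ vv t y := fun t y => pow_entry_nonneg P hnn _ y b
  have hvsum : ∀ t, ∑ y ∈ C0f, vv t y = 1 := by
    intro t
    rw [← pow_col_sum P hcol (p * t) b]
    apply Finset.sum_subset (Finset.subset_univ C0f)
    intro y _ hy
    exact hv0 t y (fun hc => hy ((hmemf y).mpr hc))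
  have hstep : ∀ (j t : ℕ) (y : F), vv (j + t) y = ∑ x ∈ C0f, (P ^ (p * j)) y x * vv t x := by
    intro j t y
    have h1 : vv (j + t) y = ∑ x, (P ^ (p * j)) y x * vv t x := by
      simp only [hvv]
      rw [show p * (j + t) = p * j + p * t by ring, pow_add_apply]
    rw [h1]
    symm
    apply Finset.sum_subset (Finset.subset_univ C0f)
    intro x _ hx
    rw [hv0 t x (fun hc => hx ((hmemf x).mpr hc)), mul_zero]
  have hrowC0 : ∀ (j : ℕ), ∀ y ∈ C0, ∑ x ∈ C0f, (P ^ (p * j)) y x = 1 := by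
    intro j y hy
    rw [← pow_row_sum P hrow (p * j) y]
    apply Finset.sum_subset (Finset.subset_univ C0f)
    intro x _ hx
    by_contra hne
    have hpos : 0 < (P ^ (p * j)) y x :=
      lt_of_le_of_ne (pow_entry_nonneg P hnn _ y x) (Ne.symm hne)
    exact hx ((hmemf x).mpr (hfwdC0 y hy j x hpos))
  set M : ℕ → ℝ := fun t => C0f.sup' hC0fne (vv t) with hM
  set m : ℕ → ℝ := fun t => C0f.inf' hC0fne (vv t) with hm
  have hmle : ∀ t, ∀ y ∈ C0f, m t ≤ vv t y := fun t y hy => Finset.inf'_le _ hy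
  have hMge : ∀ t, ∀ y ∈ C0f, vv t y ≤ M t := fun t y hy => Finset.le_sup' _ hy
  have hmM : ∀ t, m t ≤ M t := fun t => le_trans (hmle t b hbf) (hMge t b hbf)
  have hstepub : ∀ (j t : ℕ), ∀ y ∈ C0f, vv (j + t) y ≤ M t := by
    intro j t y hy
    rw [hstep j t y]
    calc ∑ x ∈ C0f, (P ^ (p * j)) y x * vv t x
        ≤ ∑ x ∈ C0f, (P ^ (p * j)) y x * M t := by
          apply Finset.sum_le_sum
          intro x hx
          exact mul_le_mul_of_nonneg_left (hMge t x hx) (pow_entry_nonneg P hnn _ y x)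
      _ = M t := by rw [← Finset.sum_mul, hrowC0 j y ((hmemf y).mp hy), one_mul]
  have hsteplb : ∀ (j t : ℕ), ∀ y ∈ C0f, m t ≤ vv (j + t) y := by
    intro j t y hy
    rw [hstep j t y]
    calc m t = ∑ x ∈ C0f, (P ^ (p * j)) y x * m t := by
          rw [← Finset.sum_mul, hrowC0 j y ((hmemf y).mp hy), one_mul]
      _ ≤ ∑ x ∈ C0f, (P ^ (p * j)) y x * vv t x := by
          apply Finset.sum_le_sum
          intro x hx
          exact mul_le_mul_of_nonneg_left (hmle t x hx) (pow_entry_nonneg P hnn _ y x)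
  have hMdec : ∀ t, M (1 + t) ≤ M t := fun t => Finset.sup'_le _ _ (hstepub 1 t)
  have hminc : ∀ t, m t ≤ m (1 + t) := fun t => Finset.le_inf' _ _ (hsteplb 1 t)
  have hprodne : (C0f ×ˢ C0f).Nonempty := hC0fne.product hC0fne
  set δ : ℝ := (C0f ×ˢ C0f).inf' hprodne (fun q => (P ^ (p * K)) q.1 q.2) with hδ
  have hδpos : 0 < δ := by
    obtain ⟨q, hq, hqe⟩ := Finset.exists_mem_eq_inf' hprodne (fun q => (P ^ (p * K)) q.1 q.2)
    rw [hδ, hqe]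
    obtain ⟨hq1, hq2⟩ := Finset.mem_product.mp hq
    exact hKpos q.1 ((hmemf _).mp hq1) q.2 ((hmemf _).mp hq2)
  have hδle : ∀ y ∈ C0f, ∀ x ∈ C0f, δ ≤ (P ^ (p * K)) y x := by
    intro y hy x hx
    have hmemp : (y, x) ∈ C0f ×ˢ C0f := Finset.mem_product.mpr ⟨hy, hx⟩
    exact Finset.inf'_le _ hmemp
  have hcontr : ∀ t, M (K + t) - m (K + t) ≤ (1 - 2 * δ) * (M t - m t) := by
    intro t
    obtain ⟨xmin, hxmin, hxminv⟩ := Finset.exists_mem_eq_inf' hC0fne (vv t)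
    obtain ⟨xmax, hxmax, hxmaxv⟩ := Finset.exists_mem_eq_sup' hC0fne (vv t)
    have hminv : m t = vv t xmin := hxminv
    have hmaxv : M t = vv t xmax := hxmaxv
    have hub : ∀ y ∈ C0f, vv (K + t) y ≤ M t - δ * (M t - m t) := by
      intro y hy
      rw [hstep K t y]
      have hsplit : ∑ x ∈ C0f, (P ^ (p * K)) y x * vv t x
          = M t - ∑ x ∈ C0f, (P ^ (p * K)) y x * (M t - vv t x) := by
        have e1 : ∑ x ∈ C0f, (P ^ (p * K)) y x * (M t - vv t x)
            = (∑ x ∈ C0f, (P ^ (p * K)) y x) * M t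
              - ∑ x ∈ C0f, (P ^ (p * K)) y x * vv t x := by
          rw [Finset.sum_mul, ← Finset.sum_sub_distrib]
          apply Finset.sum_congr rfl
          intro x _
          ring
        rw [e1, hrowC0 K y ((hmemf y).mp hy), one_mul]
        ring
      rw [hsplit]
      have h1 : (P ^ (p * K)) y xmin * (M t - vv t xmin)
          ≤ ∑ x ∈ C0f, (P ^ (p * K)) y x * (M t - vv t x) := by
        apply Finset.single_le_sum _ hxmin
        intro x hx
        exact mul_nonneg (pow_entry_nonneg P hnn _ y x) (sub_nonneg.mpr (hMge t x hx))
      have h2 : δ * (M t - m t) ≤ (P ^ (p * K)) y xmin * (M t - vv t xmin) := by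
        rw [← hminv]
        exact mul_le_mul_of_nonneg_right (hδle y hy xmin hxmin)
          (sub_nonneg.mpr (hmM t))
      linarith
    have hlb : ∀ y ∈ C0f, m t + δ * (M t - m t) ≤ vv (K + t) y := by
      intro y hy
      rw [hstep K t y]
      have hsplit : ∑ x ∈ C0f, (P ^ (p * K)) y x * vv t x
          = m t + ∑ x ∈ C0f, (P ^ (p * K)) y x * (vv t x - m t) := by
        have e1 : ∑ x ∈ C0f, (P ^ (p * K)) y x * (vv t x - m t)
            = ∑ x ∈ C0f, (P ^ (p * K)) y x * vv t x
              - (∑ x ∈ C0f, (P ^ (p * K)) y x) * m t := by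
          rw [Finset.sum_mul, ← Finset.sum_sub_distrib]
          apply Finset.sum_congr rfl
          intro x _
          ring
        rw [e1, hrowC0 K y ((hmemf y).mp hy), one_mul]
        ring
      rw [hsplit]
      have h1 : (P ^ (p * K)) y xmax * (vv t xmax - m t)
          ≤ ∑ x ∈ C0f, (P ^ (p * K)) y x * (vv t x - m t) := by
        apply Finset.single_le_sum _ hxmax
        intro x hx
        exact mul_nonneg (pow_entry_nonneg P hnn _ y x) (sub_nonneg.mpr (hmle t x hx))
      have h2 : δ * (M t - m t) ≤ (P ^ (p * K)) y xmax * (vv t xmax - m t) := by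
        rw [← hmaxv]
        exact mul_le_mul_of_nonneg_right (hδle y hy xmax hxmax)
          (sub_nonneg.mpr (hmM t))
      linarith
    have hMub : M (K + t) ≤ M t - δ * (M t - m t) := Finset.sup'_le _ _ hub
    have hmlb : m t + δ * (M t - m t) ≤ m (K + t) := Finset.le_inf' _ _ hlb
    linarith
  -- oscillation
  set osc : ℕ → ℝ := fun t => M t - m t with hosc
  have hoscnn : ∀ t, 0 ≤ osc t := fun t => sub_nonneg.mpr (hmM t)
  have hoscanti : Antitone osc := by
    apply antitone_nat_of_succ_le
    intro t
    have h1 := hMdec t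
    have h2 := hminc t
    rw [Nat.add_comm 1 t] at h1 h2
    simp only [hosc]
    linarith
  set γ : ℝ := max (1 - 2 * δ) 0 with hγ
  have hγ0 : 0 ≤ γ := le_max_right _ _
  have hγ1 : γ < 1 := by
    rw [hγ]
    apply max_lt
    · linarith
    · norm_num
  have hKge1 : 1 ≤ K := by omega
  have hcontr' : ∀ t, osc (K + t) ≤ γ * osc t := by
    intro t
    calc osc (K + t) ≤ (1 - 2 * δ) * osc t := hcontr t
      _ ≤ γ * osc t := mul_le_mul_of_nonneg_right (le_max_left _ _) (hoscnn t)
  have hgeo : ∀ q, osc (K * q) ≤ γ ^ q * osc 0 := by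
    intro q
    induction q with
    | zero => simp
    | succ q ih =>
      have h1 : osc (K * (q + 1)) ≤ γ * osc (K * q) := by
        rw [show K * (q + 1) = K + K * q by ring]
        exact hcontr' (K * q)
      calc osc (K * (q + 1)) ≤ γ * osc (K * q) := h1
        _ ≤ γ * (γ ^ q * osc 0) := mul_le_mul_of_nonneg_left ih hγ0
        _ = γ ^ (q + 1) * osc 0 := by ring
  have hosclim : Tendsto osc atTop (𝓝 0) := by
    have hbound : ∀ t, osc t ≤ γ ^ (t / K) * osc 0 := by
      intro t
      have h1 : K * (t / K) ≤ t := Nat.mul_div_le t K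
      exact le_trans (hoscanti h1) (hgeo (t / K))
    have hdiv : Tendsto (fun t : ℕ => t / K) atTop atTop := by
      apply tendsto_atTop_atTop.mpr
      intro N
      exact ⟨K * N, fun t ht => (Nat.le_div_iff_mul_le (by omega)).mpr (by nlinarith)⟩
    have hpow : Tendsto (fun t : ℕ => γ ^ (t / K) * osc 0) atTop (𝓝 0) := by
      have := (tendsto_pow_atTop_nhds_zero_of_lt_one hγ0 hγ1).comp hdiv
      simpa using this.mul_const (osc 0)
    exact squeeze_zero hoscnn hbound hpow
  -- limits of vv
  have hN0R' : (0 : ℝ) < N0 := by exact_mod_cast hN0pos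
  have havg : ∀ t, m t ≤ 1 / N0 ∧ (1 : ℝ) / N0 ≤ M t := by
    intro t
    have h1 : (1:ℝ) ≤ (N0:ℝ) * M t := by
      calc (1:ℝ) = ∑ y ∈ C0f, vv t y := (hvsum t).symm
        _ ≤ ∑ y ∈ C0f, M t := Finset.sum_le_sum (hMge t)
        _ = (N0:ℝ) * M t := by rw [Finset.sum_const, nsmul_eq_mul, ← hN0]
    have h2 : (N0:ℝ) * m t ≤ 1 := by
      calc (N0:ℝ) * m t = ∑ y ∈ C0f, m t := by rw [Finset.sum_const, nsmul_eq_mul, ← hN0]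
        _ ≤ ∑ y ∈ C0f, vv t y := Finset.sum_le_sum (hmle t)
        _ = 1 := hvsum t
    constructor
    · rw [le_div_iff₀ hN0R']
      linarith [mul_comm (m t) ((N0:ℝ))]
    · rw [div_le_iff₀ hN0R']
      linarith [mul_comm (M t) ((N0:ℝ))]
  have hvy : ∀ y ∈ C0f, Tendsto (fun t => vv t y) atTop (𝓝 (1 / N0)) := by
    intro y hy
    have hdist : ∀ t, dist (vv t y) (1 / N0) ≤ osc t := by
      intro t
      rw [Real.dist_eq, abs_le]
      have h1 := hmle t y hy
      have h2 := hMge t y hy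
      have h3 := (havg t).1
      have h4 := (havg t).2
      constructor <;> simp only [hosc] <;> linarith
    apply tendsto_iff_dist_tendsto_zero.mpr
    exact squeeze_zero (fun t => dist_nonneg) hdist hosclim
  -- final assembly
  set c0 : ℝ := ∑ y ∈ C0f, (P ^ s0) a y * (1 / N0) with hc0
  have hN0R : (0 : ℝ) < N0 := by exact_mod_cast hN0pos
  have hc0pos : 0 < c0 := by
    apply Finset.sum_pos'
    · intro y _
      exact mul_nonneg (pow_entry_nonneg P hnn _ a y) (by positivity)
    · exact ⟨b, hbf, mul_pos hab (by positivity)⟩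
  have hg : Tendsto (fun t => ∑ y ∈ C0f, (P ^ s0) a y * vv t y) atTop (𝓝 c0) := by
    rw [hc0]
    apply tendsto_finset_sum
    intro y hy
    exact (hvy y hy).const_mul _
  have hEq : ∀ d, d ∈ S → s0 ≤ d →
      (P ^ d) a b = ∑ y ∈ C0f, (P ^ s0) a y * vv ((d - s0) / p) y := by
    intro d hdS hds0
    have hdpos : 0 < (P ^ d) a b := (hSpos d).mp hdS
    have hmod : d ≡ s0 [MOD p] := hcong a d s0 hdpos hab
    have hdvd' : p ∣ d - s0 := (Nat.modEq_iff_dvd' hds0).mp hmod.symm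
    obtain ⟨t, htd⟩ := hdvd'
    have hteq : (d - s0) / p = t := by rw [htd, Nat.mul_div_cancel_left t hppos]
    have hd' : d = s0 + p * t := by omega
    rw [hteq, hd', pow_add_apply]
    symm
    apply Finset.sum_subset (Finset.subset_univ C0f)
    intro y _ hy
    rw [hv0 t y (fun hc => hy ((hmemf y).mpr hc)), mul_zero]
  have htdlim : Tendsto (fun d : ℕ => (d - s0) / p) atTop atTop := by
    apply tendsto_atTop_atTop.mpr
    intro N
    refine ⟨s0 + p * N, fun d hd => ?_⟩
    have h1 : p * N ≤ d - s0 := by omega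
    exact (Nat.le_div_iff_mul_le hppos).mpr (by rw [Nat.mul_comm]; omega)
  have hcomp := Tendsto.comp hg (htdlim.mono_left (inf_le_left : atTop ⊓ 𝓟 S ≤ atTop))
  refine ⟨c0, hc0pos, ?_⟩
  apply hcomp.congr'
  have h1 : ∀ᶠ d in atTop ⊓ 𝓟 S, s0 ≤ d := (eventually_ge_atTop s0).filter_mono inf_le_left
  have h2 : ∀ᶠ d in atTop ⊓ 𝓟 S, d ∈ S :=
    (eventually_principal.mpr (fun d hd => hd)).filter_mono inf_le_right
  filter_upwards [h1, h2] with d hd1 hd2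
  simp only [Function.comp_apply]
  exact (hEq d hd2 hd1).symm

end MarkovAux

section QuasigroupAux
open Finset
variable {n : ℕ}

def qstep (op : Fin n → Fin n → Fin n) (f : Fin n → Fin n) (π : Equiv.Perm (Fin n)) :
    Fin n → Fin n := fun i => op (f i) (π i)


def qmat (op : Fin n → Fin n → Fin n) : Matrix (Fin n → Fin n) (Fin n → Fin n) ℕ :=
  fun f g => (Finset.univ.filter (fun π : Equiv.Perm (Fin n) => qstep op f π = g)).card

theorem qmat_fiber_sum (op : Fin n → Fin n → Fin n) (f : Fin n → Fin n)
    (G : (Fin n → Fin n) → ℕ) :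
    ∑ σ : Equiv.Perm (Fin n), G (qstep op f σ) = ∑ h, qmat op f h * G h := by
  classical
  rw [← Finset.sum_fiberwise (univ : Finset (Equiv.Perm (Fin n))) (qstep op f)
    (fun σ => G (qstep op f σ))]
  apply Finset.sum_congr rfl
  intro h _
  have hc : ∀ σ ∈ univ.filter (fun σ => qstep op f σ = h), G (qstep op f σ) = G h := by
    intro σ hσ
    rw [(Finset.mem_filter.mp hσ).2]
  rw [Finset.sum_congr rfl hc, Finset.sum_const, qmat, smul_eq_mul]

theorem qmat_pow (op : Fin n → Fin n → Fin n) :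
    ∀ (d : ℕ) (f g : Fin n → Fin n),
      (qmat op ^ d) f g
        = Fintype.card {π : Fin d → Equiv.Perm (Fin n) //
            (List.ofFn π).foldl (qstep op) f = g} := by
  classical
  intro d
  induction d with
  | zero =>
    intro f g
    rw [pow_zero, Matrix.one_apply]
    have hcond : ∀ π : Fin 0 → Equiv.Perm (Fin n), (List.ofFn π).foldl (qstep op) f = f := by
      intro π
      rw [List.ofFn_zero]
      rfl
    by_cases h : f = g
    · subst h
      simp only [if_true]
      symm
      rw [Fintype.card_eq_one_iff]
      refine ⟨⟨fun i => i.elim0, hcond _⟩, ?_⟩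
      rintro ⟨π, hπ⟩
      apply Subtype.ext
      funext i
      exact i.elim0
    · simp only [h, if_false]
      symm
      rw [Fintype.card_eq_zero_iff]
      refine ⟨fun x => h ?_⟩
      have := x.2
      rwa [hcond x.1] at this
  | succ d ih =>
    intro f g
    set C : (Fin (d + 1) → Equiv.Perm (Fin n)) → Prop :=
      fun π => (List.ofFn π).foldl (qstep op) f = g with hC
    have e1 : {π : Fin (d + 1) → Equiv.Perm (Fin n) // C π}
        ≃ {q : Equiv.Perm (Fin n) × (Fin d → Equiv.Perm (Fin n)) // C (Fin.cons q.1 q.2)} :=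
      (Equiv.subtypeEquiv (Fin.consEquiv fun _ => Equiv.Perm (Fin n))
        fun q => Iff.rfl).symm
    have hEquiv : {π : Fin (d + 1) → Equiv.Perm (Fin n) // C π}
        ≃ Σ σ : Equiv.Perm (Fin n),
            {ρ : Fin d → Equiv.Perm (Fin n) // C (Fin.cons σ ρ)} :=
      e1.trans (Equiv.subtypeProdEquivSigmaSubtype fun σ ρ => C (Fin.cons σ ρ))
    rw [Fintype.card_congr hEquiv, Fintype.card_sigma]
    have hinner : ∀ σ : Equiv.Perm (Fin n),
        Fintype.card {ρ : Fin d → Equiv.Perm (Fin n) // C (Fin.cons σ ρ)}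
          = (qmat op ^ d) (qstep op f σ) g := by
      intro σ
      rw [ih (qstep op f σ) g]
      apply Fintype.card_congr
      apply Equiv.subtypeEquivRight
      intro ρ
      rw [hC]
      simp only
      rw [List.ofFn_succ, List.foldl_cons, Fin.cons_zero]
      have h2 : (fun i : Fin d => (Fin.cons σ ρ : Fin (d + 1) → Equiv.Perm (Fin n)) i.succ)
          = ρ := by
        funext i
        simp
      rw [show (List.ofFn fun i : Fin d =>
          (Fin.cons σ ρ : Fin (d + 1) → Equiv.Perm (Fin n)) i.succ) = List.ofFn ρ from
        congrArg List.ofFn h2]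
    rw [Finset.sum_congr rfl (fun σ _ => hinner σ)]
    rw [pow_succ', Matrix.mul_apply, ← qmat_fiber_sum op f (fun h => (qmat op ^ d) h g)]

theorem qmat_row_sum (op : Fin n → Fin n → Fin n) (f : Fin n → Fin n) :
    ∑ g, qmat op f g = n.factorial := by
  classical
  have h := Finset.card_eq_sum_card_fiberwise
    (f := qstep op f) (s := (univ : Finset (Equiv.Perm (Fin n))))
    (t := (univ : Finset (Fin n → Fin n))) (fun π _ => Finset.mem_univ _)
  rw [Finset.card_univ, Fintype.card_perm, Fintype.card_fin] at h
  rw [h]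
  rfl

theorem qmat_col_sum (op : Fin n → Fin n → Fin n)
    (hop : ∀ a : Fin n, Function.Bijective (op a) ∧ Function.Bijective (fun x => op x a))
    (g : Fin n → Fin n) :
    ∑ f, qmat op f g = n.factorial := by
  classical
  have hswap : ∑ f, qmat op f g
      = ∑ π : Equiv.Perm (Fin n), (univ.filter (fun f : Fin n → Fin n => qstep op f π = g)).card := by
    simp only [qmat, Finset.card_filter]
    rw [Finset.sum_comm]
  rw [hswap]
  have hone : ∀ π : Equiv.Perm (Fin n),
      (univ.filter (fun f : Fin n → Fin n => qstep op f π = g)).card = 1 := by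
    intro π
    set rdiv : Fin n → Fin n → Fin n :=
      fun y s => (Equiv.ofBijective (fun x => op x s) (hop s).2).symm y with hrdiv
    have hrd : ∀ y s, op (rdiv y s) s = y := by
      intro y s
      exact (Equiv.ofBijective (fun x => op x s) (hop s).2).apply_symm_apply y
    set f0 : Fin n → Fin n := fun i => rdiv (g i) (π i) with hf0
    have hf0g : qstep op f0 π = g := by
      funext i
      exact hrd (g i) (π i)
    have hfilter : univ.filter (fun f : Fin n → Fin n => qstep op f π = g) = {f0} := by
      ext f
      simp only [Finset.mem_filter, Finset.mem_univ, true_and, Finset.mem_singleton]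
      constructor
      · intro hf
        funext i
        apply (hop (π i)).2.injective
        show op (f i) (π i) = op (f0 i) (π i)
        have h1 : op (f i) (π i) = g i := congrFun hf i
        have h2 : op (f0 i) (π i) = g i := congrFun hf0g i
        rw [h1, h2]
      · rintro rfl
        exact hf0g
    rw [hfilter, Finset.card_singleton]
  rw [Finset.sum_congr rfl (fun π _ => hone π)]
  rw [Finset.sum_const, smul_eq_mul, mul_one, Finset.card_univ, Fintype.card_perm,
    Fintype.card_fin]

theorem fold_pointwise (op : Fin n → Fin n → Fin n) :
    ∀ (l : List (Equiv.Perm (Fin n))) (f : Fin n → Fin n) (i : Fin n),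
      (l.foldl (qstep op) f) i = (l.map (fun σ => σ i)).foldl op (f i) := by
  intro l
  induction l with
  | nil => intro f i; rfl
  | cons σ l ih =>
    intro f i
    rw [List.foldl_cons, List.map_cons, List.foldl_cons]
    exact ih (qstep op f σ) i

theorem sdset_iff (op : Fin n → Fin n → Fin n) (e : Fin n) (d : ℕ)
    (x : Fin (d + 1) → Fin n) :
    x ∈ SdSet op e (d + 1) ↔ (List.ofFn (fun j : Fin d => x j.succ)).foldl op (x 0) = e := by
  unfold SdSet
  rw [Set.mem_setOf_eq, List.ofFn_succ]
  rfl

/-- the walk condition -/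
def WCond (op : Fin n → Fin n → Fin n) (e : Fin n) (d : ℕ)
    (π : Fin d → Equiv.Perm (Fin n)) : Prop :=
  (List.ofFn π).foldl (qstep op) (fun i => i) = (fun _ => e)

/-- the tuple associated to a walk -/
def tFun {d : ℕ} (π : Fin d → Equiv.Perm (Fin n)) (i : Fin n) : Fin (d + 1) → Fin n :=
  Fin.cons i (fun j => π j i)

theorem tFun_zero {d : ℕ} (π : Fin d → Equiv.Perm (Fin n)) (i : Fin n) :
    tFun π i 0 = i := rfl

theorem tFun_succ {d : ℕ} (π : Fin d → Equiv.Perm (Fin n)) (i : Fin n) (j : Fin d) :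
    tFun π i j.succ = π j i := by
  unfold tFun
  simp

theorem wcond_pointwise {op : Fin n → Fin n → Fin n} {e : Fin n} {d : ℕ}
    {π : Fin d → Equiv.Perm (Fin n)} (h : WCond op e d π) (i : Fin n) :
    (List.ofFn (fun j => π j i)).foldl op i = e := by
  have h1 := congrFun h i
  rw [fold_pointwise op (List.ofFn π) (fun i => i) i] at h1
  rwa [List.map_ofFn] at h1

instance {op : Fin n → Fin n → Fin n} {e : Fin n} {d : ℕ} :
    DecidablePred (WCond op e d) :=
  fun π => decidable_of_iff
    ((List.ofFn π).foldl (qstep op) (fun i => i) = fun _ => e) Iff.rfl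

theorem tcount_eq_card (op : Fin n → Fin n → Fin n) (e : Fin n)
    (hop : ∀ a : Fin n, Function.Bijective (op a) ∧ Function.Bijective (fun x => op x a))
    (d : ℕ) :
    Tcount op e d = Fintype.card {π : Fin d → Equiv.Perm (Fin n) // WCond op e d π} := by
  classical
  -- the map
  have htmem : ∀ (π : Fin d → Equiv.Perm (Fin n)), WCond op e d π →
      ∀ i, tFun π i ∈ SdSet op e (d + 1) := by
    intro π hπ i
    rw [sdset_iff]
    rw [tFun_zero]
    have hl : (fun j : Fin d => tFun π i j.succ) = fun j => π j i :=
      funext fun j => tFun_succ π i j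
    rw [hl]
    exact wcond_pointwise hπ i
  have htinj : ∀ (π : Fin d → Equiv.Perm (Fin n)), Function.Injective (tFun π) := by
    intro π i i' h
    have := congrFun h 0
    rwa [tFun_zero, tFun_zero] at this
  set Φ : {π : Fin d → Equiv.Perm (Fin n) // WCond op e d π} →
      {T : Finset (Fin (d + 1) → Fin n) // IsTransversal (SdSet op e (d + 1)) T} :=
    fun π => ⟨Finset.image (tFun π.1) univ, by
      refine ⟨?_, ?_, ?_⟩
      · rw [Finset.card_image_of_injective univ (htinj π.1), Finset.card_univ,
          Fintype.card_fin]
      · intro x hx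
        obtain ⟨i, -, rfl⟩ := Finset.mem_image.mp hx
        exact htmem π.1 π.2 i
      · intro j v
        refine Fin.cases ?_ ?_ j
        · exact ⟨tFun π.1 v, Finset.mem_image_of_mem _ (Finset.mem_univ v), tFun_zero π.1 v⟩
        · intro j'
          refine ⟨tFun π.1 ((π.1 j').symm v),
            Finset.mem_image_of_mem _ (Finset.mem_univ _), ?_⟩
          rw [tFun_succ]
          exact (π.1 j').apply_symm_apply v⟩ with hΦ
  have hbij : Function.Bijective Φ := by
    constructor
    · rintro ⟨π, hπ⟩ ⟨π', hπ'⟩ h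
      have himg : Finset.image (tFun π) univ = Finset.image (tFun π') univ :=
        congrArg Subtype.val h
      apply Subtype.ext
      show π = π'
      funext j
      apply Equiv.ext
      intro i
      have h1 : tFun π i ∈ Finset.image (tFun π') univ := by
        rw [← himg]
        exact Finset.mem_image_of_mem _ (Finset.mem_univ i)
      obtain ⟨i', -, hi'⟩ := Finset.mem_image.mp h1
      have h0 : i' = i := by
        have := congrFun hi' 0
        rwa [tFun_zero] at this
      subst h0
      have := congrFun hi' j.succ
      rw [tFun_succ, tFun_succ] at this
      exact this.symm
    · rintro ⟨T, hcard, hsub, hsurj⟩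
      -- extract the labelling function
      have hgsurj : Function.Surjective (fun x : {x // x ∈ T} => x.1 0) := by
        intro v
        obtain ⟨x, hx, hx0⟩ := hsurj 0 v
        exact ⟨⟨x, hx⟩, hx0⟩
      have hcards : Fintype.card {x // x ∈ T} = Fintype.card (Fin n) := by
        rw [Fintype.card_coe, hcard, Fintype.card_fin]
      have hgbij : Function.Bijective (fun x : {x // x ∈ T} => x.1 0) :=
        (Fintype.bijective_iff_surjective_and_card _).mpr ⟨hgsurj, hcards⟩
      set gE := Equiv.ofBijective _ hgbij with hgE
      set φ : Fin n → (Fin (d + 1) → Fin n) := fun v => (gE.symm v).1 with hφ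
      have hφT : ∀ v, φ v ∈ T := fun v => (gE.symm v).2
      have hφ0 : ∀ v, φ v 0 = v := fun v => gE.apply_symm_apply v
      have huniq : ∀ x, (hx : x ∈ T) → φ (x 0) = x := by
        intro x hx
        have h1 : gE ⟨x, hx⟩ = x 0 := rfl
        have h2 : gE.symm (x 0) = ⟨x, hx⟩ := by
          rw [← h1, gE.symm_apply_apply]
        show (gE.symm (x 0)).1 = x
        rw [h2]
      have hψsurj : ∀ j : Fin d, Function.Surjective (fun i => φ i j.succ) := by
        intro j v
        obtain ⟨x, hx, hxv⟩ := hsurj j.succ v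
        refine ⟨x 0, ?_⟩
        show φ (x 0) j.succ = v
        rw [huniq x hx]
        exact hxv
      have hψbij : ∀ j : Fin d, Function.Bijective (fun i => φ i j.succ) :=
        fun j => (Fintype.bijective_iff_surjective_and_card _).mpr ⟨hψsurj j, rfl⟩
      set π : Fin d → Equiv.Perm (Fin n) := fun j => Equiv.ofBijective _ (hψbij j) with hπd
      have hcond : WCond op e d π := by
        funext i
        rw [fold_pointwise op (List.ofFn π) (fun i => i) i, List.map_ofFn]
        have hmem : φ i ∈ SdSet op e (d + 1) := hsub (hφT i)
        rw [sdset_iff] at hmem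
        have hl : (List.ofFn fun j : Fin d => ((fun σ : Equiv.Perm (Fin n) => σ i) ∘ π) j)
            = List.ofFn (fun j : Fin d => φ i j.succ) := by
          apply congrArg List.ofFn
          funext j
          rfl
        rw [hl]
        rw [hφ0 i] at hmem
        exact hmem
      refine ⟨⟨π, hcond⟩, ?_⟩
      apply Subtype.ext
      show Finset.image (tFun π) univ = T
      have htφ : tFun π = φ ∘ (fun i => i) := by
        funext i j
        refine Fin.cases ?_ ?_ j
        · rw [tFun_zero, Function.comp_apply, hφ0]
        · intro j'
          rw [tFun_succ]
          rfl
      have himg : Finset.image (tFun π) univ = Finset.image φ univ := by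
        apply Finset.image_congr
        intro i _
        rw [htφ]
        rfl
      rw [himg]
      have hsubT : Finset.image φ univ ⊆ T := by
        intro x hx
        obtain ⟨v, -, rfl⟩ := Finset.mem_image.mp hx
        exact hφT v
      apply Finset.eq_of_subset_of_card_le hsubT
      rw [hcard]
      have hφinj : Function.Injective φ := by
        intro v v' h
        rw [← hφ0 v, ← hφ0 v', h]
      rw [Finset.card_image_of_injective univ hφinj, Finset.card_univ, Fintype.card_fin]
  calc Tcount op e d
      = Nat.card {T : Finset (Fin (d + 1) → Fin n) // IsTransversal (SdSet op e (d + 1)) T} :=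
        (Nat.card_coe_set_eq _).symm
    _ = Fintype.card {π : Fin d → Equiv.Perm (Fin n) // WCond op e d π} := by
        rw [← Nat.card_eq_of_bijective Φ hbij, Nat.card_eq_fintype_card]

end QuasigroupAux

open Filter in
/-- For a binary quasigroup `op` of order `n` there is a constant
`c = c(G,1) > 0` such that `T_d / (n!)^(d-1)` tends to `c` as `d → ∞` along the set
of those `d` for which `T_d ≠ 0`. -/
theorem transversal_asymptotics {n : ℕ} (op : Fin n → Fin n → Fin n) (e : Fin n)
    (hop : ∀ a : Fin n, Function.Bijective (op a) ∧ Function.Bijective (fun x => op x a)) :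
    ∃ c : ℝ, 0 < c ∧
      Tendsto (fun d : ℕ => (Tcount op e d : ℝ) / (n.factorial : ℝ) ^ (d - 1))
        (atTop ⊓ 𝓟 {d : ℕ | Tcount op e d ≠ 0})
        (nhds c) := by
  classical
  set a : Fin n → Fin n := fun i => i with ha
  set b : Fin n → Fin n := fun _ => e with hb
  set P : Matrix (Fin n → Fin n) (Fin n → Fin n) ℝ :=
    ((n.factorial : ℝ)⁻¹) • (Nat.castRingHom ℝ).mapMatrix (qmat op) with hP
  have hfact : (0 : ℝ) < n.factorial := by exact_mod_cast n.factorial_pos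
  have hPd : ∀ (d : ℕ) (f g : Fin n → Fin n),
      (P ^ d) f g = ((n.factorial : ℝ)⁻¹) ^ d * ((qmat op ^ d) f g : ℝ) := by
    intro d f g
    rw [hP, smul_pow, ← map_pow]
    simp [Matrix.smul_apply, RingHom.mapMatrix_apply, Matrix.map_apply, Nat.coe_castRingHom]
  have hTcN : ∀ d : ℕ, Tcount op e d = (qmat op ^ d) a b := by
    intro d
    rw [tcount_eq_card op e hop d, qmat_pow op d]
    exact Fintype.card_congr (Equiv.subtypeEquivRight fun π => Iff.rfl)
  have hnnP : ∀ f g : Fin n → Fin n, 0 ≤ P f g := by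
    intro f g
    rw [hP]
    simp only [Matrix.smul_apply, RingHom.mapMatrix_apply, Matrix.map_apply,
      Nat.coe_castRingHom, smul_eq_mul]
    exact mul_nonneg (by positivity) (Nat.cast_nonneg _)
  have hrowP : ∀ f : Fin n → Fin n, ∑ g, P f g = 1 := by
    intro f
    simp only [hP, Matrix.smul_apply, RingHom.mapMatrix_apply, Matrix.map_apply, Nat.coe_castRingHom, smul_eq_mul]
    rw [← Finset.mul_sum]
    rw [show ∑ g, ((qmat op f g : ℝ)) = ((n.factorial : ℝ)) from by
      exact_mod_cast congrArg (Nat.cast : ℕ → ℝ) (qmat_row_sum op f)]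
    field_simp
  have hcolP : ∀ g : Fin n → Fin n, ∑ f, P f g = 1 := by
    intro g
    simp only [hP, Matrix.smul_apply, RingHom.mapMatrix_apply, Matrix.map_apply, Nat.coe_castRingHom, smul_eq_mul]
    rw [← Finset.mul_sum]
    rw [show ∑ f, ((qmat op f g : ℝ)) = ((n.factorial : ℝ)) from by
      exact_mod_cast congrArg (Nat.cast : ℕ → ℝ) (qmat_col_sum op hop g)]
    field_simp
  obtain ⟨c0, hc0, hlim⟩ := markov_limit P hnnP hrowP hcolP a b
  have hPdT : ∀ d : ℕ, (P ^ d) a b = ((n.factorial : ℝ)⁻¹) ^ d * (Tcount op e d : ℝ) := by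
    intro d
    rw [hPd d a b, hTcN d]
  have hsets : {d : ℕ | Tcount op e d ≠ 0} = {d : ℕ | (P ^ d) a b ≠ 0} := by
    ext d
    simp only [Set.mem_setOf_eq]
    rw [hPdT d]
    constructor
    · intro hd
      exact mul_ne_zero (pow_ne_zero d (inv_ne_zero hfact.ne')) (Nat.cast_ne_zero.mpr hd)
    · intro hd
      intro hc
      rw [hc] at hd
      simp at hd
  refine ⟨(n.factorial : ℝ) * c0, by positivity, ?_⟩
  rw [hsets]
  have hlim2 : Tendsto (fun d : ℕ => (n.factorial : ℝ) * (P ^ d) a b)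
      (atTop ⊓ 𝓟 {d : ℕ | (P ^ d) a b ≠ 0}) (nhds ((n.factorial : ℝ) * c0)) :=
    hlim.const_mul _
  apply hlim2.congr'
  filter_upwards [(eventually_ge_atTop 1).filter_mono
    (inf_le_left : atTop ⊓ 𝓟 {d : ℕ | (P ^ d) a b ≠ 0} ≤ atTop)] with d hd
  have h1 : (Tcount op e d : ℝ) = (n.factorial : ℝ) ^ d * (P ^ d) a b := by
    rw [hPdT d, ← mul_assoc, ← mul_pow, mul_inv_cancel₀ hfact.ne', one_pow, one_mul]
  obtain ⟨k, rfl⟩ : ∃ k, d = k + 1 := ⟨d - 1, by omega⟩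
  rw [h1, show k + 1 - 1 = k from rfl, pow_succ]
  field_simp
  ring
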